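/- Let $\alpha > 0$, $M \ge 2$, $R \ge 1$ and let $\w_r(R,M)$ be the Richardson–Romberg weights for refiners $n_r = M^{r-1}$ and $\widetilde{\w}_{R+1} = (-1)^{R-1} M^{-\alpha R(R-1)/2}$. Then $\frac{1}{|\widetilde{\w}_{R+1}|}\sum_{r=1}^R \frac{|\w_r(R,M)|}{n_r^{\alpha R}} \le \frac{1}{\pi_{\alpha,M}^2}\sum_{k \ge 0} M^{-\frac{\alpha}{2}k(k+1)}$, with the bound uniform in $R$. -/

import Mathlib

open Finset
set_option maxHeartbeats 2000000

/-- Richardson–Romberg weight `w_{r+1}(R,M)` for geometric refiners `n_r = M^{r-1}`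
(Lean index `r` corresponds to paper index `r+1`). -/
noncomputable def rrWeight (α : ℝ) (M R r : ℕ) : ℝ :=
  (-1 : ℝ) ^ (R - 1 - r) *
      (M : ℝ) ^ (-(α / 2) * (((R - 1 - r) * (R - r) : ℕ) : ℝ)) /
    ((∏ j ∈ range r, (1 - (M : ℝ) ^ (-((j + 1 : ℕ) : ℝ) * α))) *
      ∏ j ∈ range (R - 1 - r), (1 - (M : ℝ) ^ (-((j + 1 : ℕ) : ℝ) * α)))

/-- The infinite product `π_{α,M} = ∏_{k ≥ 1} (1 - M^{-αk})`. -/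
noncomputable def piAlphaM (α : ℝ) (M : ℕ) : ℝ :=
  ∏' k : ℕ, (1 - (M : ℝ) ^ (-(α * ((k + 1 : ℕ) : ℝ))))

theorem rrWeight_normalized_sum_bound (α : ℝ) (hα : 0 < α) (M R : ℕ)
    (hM : 2 ≤ M) (hR : 1 ≤ R) :
    (1 / |(-1 : ℝ) ^ (R - 1) * (M : ℝ) ^ (-(α * ((R * (R - 1) : ℕ) : ℝ) / 2))|) *
        ∑ r ∈ range R, |rrWeight α M R r| / ((M : ℝ) ^ (r : ℕ)) ^ (α * R) ≤
      1 / (piAlphaM α M) ^ 2 *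
        ∑' k : ℕ, (M : ℝ) ^ (-(α * ((k * (k + 1) : ℕ) : ℝ) / 2)) := by
  have hM0 : (0 : ℝ) < M := by positivity
  have hM1 : (1 : ℝ) < M := by exact_mod_cast lt_of_lt_of_le one_lt_two (by exact_mod_cast hM)
  set F : ℕ → ℝ := fun k => 1 - (M : ℝ) ^ (-(α * ((k + 1 : ℕ) : ℝ))) with hF
  -- basic facts on factors
  have hFpos : ∀ k, 0 < F k := by
    intro k
    have : (M : ℝ) ^ (-(α * ((k + 1 : ℕ) : ℝ))) < 1 := by
      apply Real.rpow_lt_one_of_one_lt_of_neg hM1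
      have : (0:ℝ) < α * ((k + 1 : ℕ) : ℝ) := by positivity
      linarith
    simp only [hF]; linarith
  have hFle1 : ∀ k, F k ≤ 1 := by
    intro k
    have : (0:ℝ) < (M : ℝ) ^ (-(α * ((k + 1 : ℕ) : ℝ))) := Real.rpow_pos_of_pos hM0 _
    simp only [hF]; linarith
  -- summability of logs
  set q : ℝ := (M : ℝ) ^ (-α) with hq
  have hq0 : 0 < q := Real.rpow_pos_of_pos hM0 _
  have hq1 : q < 1 := by
    apply Real.rpow_lt_one_of_one_lt_of_neg hM1; linarith
  have hxq : ∀ k : ℕ, (M : ℝ) ^ (-(α * ((k + 1 : ℕ) : ℝ))) = q ^ (k + 1) := by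
    intro k
    rw [hq, ← Real.rpow_natCast ((M:ℝ) ^ (-α)) (k+1), ← Real.rpow_mul (le_of_lt hM0)]
    congr 1
    push_cast; ring
  have hlogsum : Summable fun k => Real.log (F k) := by
    rw [← summable_neg_iff]
    have hmaj : Summable fun k : ℕ => (1 - q)⁻¹ * q ^ (k + 1) := by
      apply Summable.mul_left
      exact ((summable_geometric_of_lt_one (le_of_lt hq0) hq1).mul_left q).congr
        (fun k => by ring)
    refine Summable.of_nonneg_of_le (fun k => ?_) (fun k => ?_) hmaj
    · have := Real.log_nonpos (le_of_lt (hFpos k)) (hFle1 k)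
      linarith
    ·
      have hx : (M : ℝ) ^ (-(α * ((k + 1 : ℕ) : ℝ))) = q ^ (k+1) := hxq k
      have hxlt : q ^ (k+1) ≤ q := by
        calc q ^ (k+1) ≤ q ^ 1 := pow_le_pow_of_le_one (le_of_lt hq0) (le_of_lt hq1) (by omega)
        _ = q := pow_one q
      have hFk : F k = 1 - q ^ (k+1) := by simp only [hF]; rw [hx]
      have h1 : Real.log (F k)⁻¹ ≤ (F k)⁻¹ - 1 :=
        Real.log_le_sub_one_of_pos (inv_pos.mpr (hFpos k))
      rw [Real.log_inv] at h1
      have h2 : (F k)⁻¹ - 1 = q ^ (k+1) / F k := by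
        rw [eq_div_iff (hFpos k).ne', sub_mul, inv_mul_cancel₀ (hFpos k).ne', hFk]
        ring
      have h3 : q ^ (k+1) / F k ≤ q ^ (k+1) / (1 - q) := by
        apply div_le_div_of_nonneg_left (by positivity) (by linarith) (by rw [hFk]; linarith)
      calc -Real.log (F k) ≤ (F k)⁻¹ - 1 := h1
        _ = q ^ (k+1) / F k := h2
        _ ≤ q ^ (k+1) / (1 - q) := h3
        _ = (1 - q)⁻¹ * q ^ (k+1) := by ring
  -- π = exp(∑' log F k)
  have hpi_eq : piAlphaM α M = Real.exp (∑' k, Real.log (F k)) := by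
    have h2 := Real.rexp_tsum_eq_tprod (f := F) (fun k => hFpos k) hlogsum
    exact h2.symm
  have hπpos : 0 < piAlphaM α M := by rw [hpi_eq]; exact Real.exp_pos _
  -- π ≤ any partial product
  have hπle : ∀ m : ℕ, piAlphaM α M ≤ ∏ j ∈ range m, F j := by
    intro m
    have htail : (∑' k, Real.log (F (k + m))) ≤ 0 :=
      tsum_nonpos fun k => Real.log_nonpos (le_of_lt (hFpos _)) (hFle1 _)
    have hsplit := Summable.sum_add_tsum_nat_add (f := fun k => Real.log (F k)) m hlogsum
    have h1 : (∑' k, Real.log (F k)) ≤ ∑ j ∈ range m, Real.log (F j) := by linarith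
    calc piAlphaM α M = Real.exp (∑' k, Real.log (F k)) := hpi_eq
      _ ≤ Real.exp (∑ j ∈ range m, Real.log (F j)) := Real.exp_le_exp.2 h1
      _ = ∏ j ∈ range m, Real.exp (Real.log (F j)) := Real.exp_sum _ _
      _ = ∏ j ∈ range m, F j := prod_congr rfl fun j _ => Real.exp_log (hFpos j)
  -- products in rrWeight are partial products of F
  have hQ : ∀ m : ℕ, (∏ j ∈ range m, (1 - (M : ℝ) ^ (-((j + 1 : ℕ) : ℝ) * α)))
      = ∏ j ∈ range m, F j := by
    intro m
    refine prod_congr rfl fun j _ => ?_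
    simp only [hF]
    congr 1
    congr 1
    push_cast; ring
  have hQpos : ∀ m : ℕ, 0 < ∏ j ∈ range m, F j :=
    fun m => prod_pos fun j _ => hFpos j
  -- the RHS summand
  set G : ℕ → ℝ := fun k => (M : ℝ) ^ (-(α * ((k * (k + 1) : ℕ) : ℝ)) / 2) with hG
  have hGnonneg : ∀ k, 0 ≤ G k := fun k => le_of_lt (Real.rpow_pos_of_pos hM0 _)
  have hGsum : Summable G := by
    refine Summable.of_nonneg_of_le hGnonneg (fun k => ?_)
      (summable_geometric_of_lt_one (le_of_lt hq0) hq1)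
    ·
      have : G k ≤ (M : ℝ) ^ (-(α * k)) := by
        apply Real.rpow_le_rpow_of_exponent_le (le_of_lt hM1)
        have hk' : k * 2 ≤ k * (k + 1) := by
          rcases Nat.eq_zero_or_pos k with h | h
          · simp [h]
          · exact Nat.mul_le_mul_left k (by omega)
        have hk : (k : ℝ) * 2 ≤ ((k * (k + 1) : ℕ) : ℝ) := by
          exact_mod_cast hk'
        nlinarith [hα.le]
      calc G k ≤ (M : ℝ) ^ (-(α * k)) := this
        _ = q ^ k := by
          rw [hq, ← Real.rpow_natCast ((M:ℝ) ^ (-α)) k, ← Real.rpow_mul (le_of_lt hM0)]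
          congr 1; ring
  -- normalizing constant
  have habs : |(-1 : ℝ) ^ (R - 1) * (M : ℝ) ^ (-(α * ((R * (R - 1) : ℕ) : ℝ) / 2))|
      = (M : ℝ) ^ (-(α * ((R * (R - 1) : ℕ) : ℝ) / 2)) := by
    rw [abs_mul, abs_pow, abs_neg, abs_one, one_pow, one_mul,
      abs_of_pos (Real.rpow_pos_of_pos hM0 _)]
  -- termwise bound
  have hterm : ∀ r ∈ range R,
      (1 / |(-1 : ℝ) ^ (R - 1) * (M : ℝ) ^ (-(α * ((R * (R - 1) : ℕ) : ℝ) / 2))|) *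
        (|rrWeight α M R r| / ((M : ℝ) ^ (r : ℕ)) ^ (α * R)) ≤
      (1 / (piAlphaM α M) ^ 2) * G r := by
    intro r hr
    rw [mem_range] at hr
    obtain ⟨s, hs⟩ : ∃ s, R = r + s + 1 := ⟨R - r - 1, by omega⟩
    have hs1 : R - 1 - r = s := by omega
    have hs2 : R - r = s + 1 := by omega
    -- |rrWeight|
    have hw : |rrWeight α M R r| =
        (M : ℝ) ^ (-(α / 2) * (((s * (s + 1)) : ℕ) : ℝ)) /
          ((∏ j ∈ range r, F j) * ∏ j ∈ range s, F j) := by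
      rw [rrWeight, hs1, hs2, hQ, hQ, abs_div, abs_mul, abs_pow, abs_neg, abs_one,
        one_pow, one_mul, abs_of_pos (Real.rpow_pos_of_pos hM0 _),
        abs_of_pos (mul_pos (hQpos r) (hQpos s))]
    have hden : ((M : ℝ) ^ (r : ℕ)) ^ (α * R) = (M : ℝ) ^ ((r : ℝ) * (α * R)) := by
      rw [Real.rpow_mul (le_of_lt hM0), Real.rpow_natCast]
    rw [habs, hw, hden]
    set P := (∏ j ∈ range r, F j) * ∏ j ∈ range s, F j with hP
    have hPpos : 0 < P := mul_pos (hQpos r) (hQpos s)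
    have hPP : piAlphaM α M ^ 2 ≤ P := by
      calc piAlphaM α M ^ 2 = piAlphaM α M * piAlphaM α M := sq (piAlphaM α M)
        _ ≤ (∏ j ∈ range r, F j) * ∏ j ∈ range s, F j :=
          mul_le_mul (hπle r) (hπle s) (le_of_lt hπpos) (le_of_lt (hQpos r))
    have hexp : ((M : ℝ) ^ (-(α * ((R * (R - 1) : ℕ) : ℝ) / 2)))⁻¹ *
        ((M : ℝ) ^ (-(α / 2) * (((s * (s + 1)) : ℕ) : ℝ)) /
          (M : ℝ) ^ ((r : ℝ) * (α * R))) = G r := by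
      rw [← Real.rpow_neg (le_of_lt hM0), ← Real.rpow_sub hM0, ← Real.rpow_add hM0, hG]
      congr 1
      rw [hs]
      simp only [Nat.add_sub_cancel]
      push_cast
      ring
    calc (1 / (M : ℝ) ^ (-(α * ((R * (R - 1) : ℕ) : ℝ) / 2))) *
          ((M : ℝ) ^ (-(α / 2) * (((s * (s + 1)) : ℕ) : ℝ)) / P /
            (M : ℝ) ^ ((r : ℝ) * (α * R)))
        = (((M : ℝ) ^ (-(α * ((R * (R - 1) : ℕ) : ℝ) / 2)))⁻¹ *
            ((M : ℝ) ^ (-(α / 2) * (((s * (s + 1)) : ℕ) : ℝ)) /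
              (M : ℝ) ^ ((r : ℝ) * (α * R)))) * (1 / P) := by ring
      _ = G r * (1 / P) := by rw [hexp]
      _ ≤ G r * (1 / piAlphaM α M ^ 2) := by
          apply mul_le_mul_of_nonneg_left _ (hGnonneg r)
          exact one_div_le_one_div_of_le (by positivity) hPP
      _ = (1 / piAlphaM α M ^ 2) * G r := by ring
  -- combine
  rw [mul_sum]
  have hfinal : ∑ r ∈ range R, (1 / (piAlphaM α M) ^ 2) * G r ≤
      1 / (piAlphaM α M) ^ 2 *
        ∑' k : ℕ, (M : ℝ) ^ (-(α * ((k * (k + 1) : ℕ) : ℝ) / 2)) := by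
    rw [← mul_sum]
    have ht : (∑' k : ℕ, (M : ℝ) ^ (-(α * ((k * (k + 1) : ℕ) : ℝ) / 2))) = ∑' k, G k := by
      refine tsum_congr fun k => ?_
      simp only [hG]
      congr 1
      ring
    rw [ht]
    exact mul_le_mul_of_nonneg_left
      (Summable.sum_le_tsum _ (fun k _ => hGnonneg k) hGsum) (by positivity)
  exact le_trans (sum_le_sum hterm) hfinal
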